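/- Let F be an algebraically closed field of characteristic ≠ 2, V an infinite-dimensional vector space over F with a nondegenerate quadratic form Q, and φ : V → V an orthogonal linear transformation. If φ is finitary and either φ = Id or det(φ|_{V/V(1)}) = 1, then the Bogolyubov automorphism [φ] of Cl(V,Q) is inner. -/

import Mathlib

/-- The eigenspace `V(α) = ker (φ - α·Id)` of a linear operator `φ`. -/
noncomputable def eigSp {F V : Type*} [Field F] [AddCommGroup V] [Module F V]
    (φ : V →ₗ[F] V) (α : F) : Submodule F V :=
  LinearMap.ker (φ - α • LinearMap.id)

/-- The eigenspace `V(α)` is `φ`-invariant, so `φ` induces a linear map on the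
quotient `V / V(α)`. -/
noncomputable def quotMap {F V : Type*} [Field F] [AddCommGroup V] [Module F V]
    (φ : V →ₗ[F] V) (α : F) : (V ⧸ eigSp φ α) →ₗ[F] (V ⧸ eigSp φ α) :=
  Submodule.mapQ _ _ φ (by
    intro v hv
    simp only [eigSp, LinearMap.mem_ker, LinearMap.sub_apply, LinearMap.smul_apply,
      LinearMap.id_coe, id_eq, sub_eq_zero, Submodule.mem_comap] at hv ⊢
    rw [hv, map_smul, hv])

open QuadraticMap Module

section Refl
variable {F V : Type*} [Field F] [AddCommGroup V] [Module F V]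

/-- Reflection in the hyperplane orthogonal to `w` (junk if `Q w = 0`). -/
noncomputable def rf (Q : QuadraticForm F V) (w : V) : V →ₗ[F] V :=
  LinearMap.id - (Q w)⁻¹ • ((QuadraticMap.polarBilin Q w).smulRight w)

variable (Q : QuadraticForm F V)

theorem rf_apply (w v : V) : rf Q w v = v - ((Q w)⁻¹ * polar Q w v) • w := by
  simp [rf, smul_smul]

theorem rf_of_ortho {w v : V} (h : polar Q w v = 0) : rf Q w v = v := by
  simp [rf_apply, h]

theorem polar_expand (x y : V) : Q (x + y) = Q x + Q y + polar Q x y := by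
  simp [QuadraticMap.polar]

theorem rf_self {w : V} (hw : Q w ≠ 0) : rf Q w w = -w := by
  rw [rf_apply, polar_self]
  rw [two_nsmul, ← two_mul]
  field_simp
  module

theorem rf_map_Q {w : V} (hw : Q w ≠ 0) (v : V) : Q (rf Q w v) = Q v := by
  rw [rf_apply, sub_eq_add_neg, ← neg_smul, polar_expand, QuadraticMap.map_smul,
    polar_smul_right, polar_comm]
  have h2 : polar Q w w = 2 * Q w := by rw [polar_self, two_nsmul, two_mul]
  field_simp
  ring_nf
  field_simp
  ring

theorem polar_map (f : V →ₗ[F] V) (hf : ∀ x, Q (f x) = Q x) (a b : V) :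
    polar Q (f a) (f b) = polar Q a b := by
  simp [QuadraticMap.polar, ← map_add, hf]

theorem rf_rf {w : V} (hw : Q w ≠ 0) (v : V) : rf Q w (rf Q w v) = v := by
  rw [rf_apply Q w v, LinearMap.map_sub, LinearMap.map_smul, rf_self Q hw, rf_apply]
  module

theorem rf_case1 {x v : V} (hxv : Q x = Q v) (hu : Q (x - v) ≠ 0) :
    rf Q (x - v) x = v := by
  have hp : polar Q (x - v) x = Q (x - v) := by
    have : Q (x - v) = Q x + Q v - polar Q x v := by
      rw [sub_eq_add_neg, polar_expand, QuadraticMap.map_neg, polar_neg_right]; try ring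
    rw [polar_sub_left, polar_self, this, hxv, two_nsmul, polar_comm]; try ring
  rw [rf_apply, hp, inv_mul_cancel₀ hu, one_smul, sub_sub_cancel]

theorem rf_case2 {x v : V} (hxv : Q x = Q v) (hu : Q (x + v) ≠ 0) :
    rf Q (x + v) x = -v := by
  have hp : polar Q (x + v) x = Q (x + v) := by
    have : Q (x + v) = Q x + Q v + polar Q x v := polar_expand Q x v
    rw [polar_add_left, polar_self, this, hxv, two_nsmul, polar_comm]; try ring
  rw [rf_apply, hp, inv_mul_cancel₀ hu, one_smul]
  abel

theorem q_add_of_q_sub_zero {x v : V} (hxv : Q x = Q v) (h0 : Q (x - v) = 0) :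
    Q (x + v) = 4 * Q v := by
  have h1 : Q (x - v) = Q x + Q v - polar Q x v := by
    rw [sub_eq_add_neg, polar_expand, QuadraticMap.map_neg, polar_neg_right]; try ring
  have h2 : Q (x + v) = Q x + Q v + polar Q x v := polar_expand Q x v
  rw [h1, hxv] at h0
  rw [h2, hxv]
  linear_combination (-1 : F) * h0

end Refl

section CD
variable {F V : Type*} [Field F] [AddCommGroup V] [Module F V]
variable (Q : QuadraticForm F V)

/-- Nondegeneracy of the polar form restricted to a submodule. -/
def Ndg (W : Submodule F V) : Prop :=
  ∀ x ∈ W, (∀ y ∈ W, polar Q x y = 0) → x = 0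

theorem exists_anisotropic {W : Submodule F V} (hnd : Ndg Q W) (hW : W ≠ ⊥) :
    ∃ v ∈ W, Q v ≠ 0 := by
  by_contra h
  push_neg at h
  apply hW
  rw [Submodule.eq_bot_iff]
  intro x hx
  refine hnd x hx fun y hy => ?_
  have := polar_expand Q x y
  rw [h x hx, h y hy, h (x + y) (W.add_mem hx hy)] at this
  linear_combination -this

theorem rf_sub_mem (w y : V) : rf Q w y - y = -((Q w)⁻¹ * polar Q w y) • w := by
  rw [rf_apply]; module

theorem cartan_dieudonne (hchar : (2 : F) ≠ 0) :
    ∀ n : ℕ, ∀ W : Submodule F V, FiniteDimensional F W → finrank F W ≤ n →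
    Ndg Q W → ∀ φ : V →ₗ[F] V, (∀ x, Q (φ x) = Q x) → (∀ x, φ x - x ∈ W) →
    ∃ l : List V, (∀ w ∈ l, Q w ≠ 0 ∧ w ∈ W) ∧ φ = (l.map (rf Q)).prod := by
  intro n
  induction n with
  | zero =>
    intro W hfd hrk hnd φ hφQ hφW
    refine ⟨[], by simp, ?_⟩
    have hbot : W = ⊥ := Submodule.finrank_eq_zero.mp (Nat.le_zero.mp hrk)
    ext x
    have := hφW x
    rw [hbot, Submodule.mem_bot, sub_eq_zero] at this
    simpa using this
  | succ n IH =>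
    intro W hfd hrk hnd φ hφQ hφW
    by_cases hbot : W = ⊥
    · refine ⟨[], by simp, ?_⟩
      ext x
      have := hφW x
      rw [hbot, Submodule.mem_bot, sub_eq_zero] at this
      simpa using this
    obtain ⟨v, hvW, hv⟩ := exists_anisotropic Q hnd hbot
    have hpvv : polar Q v v = 2 * Q v := by rw [polar_self, two_nsmul, two_mul]
    -- the orthogonal complement of v inside W
    set W' : Submodule F V := W ⊓ LinearMap.ker (polarBilin Q v) with hW'def
    have hmemW' : ∀ y, y ∈ W' ↔ y ∈ W ∧ polar Q v y = 0 := by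
      intro y
      simp [hW'def, LinearMap.mem_ker]
    have hvnW' : v ∉ W' := by
      rw [hmemW']
      rintro ⟨-, h⟩
      rw [hpvv] at h
      exact mul_ne_zero hchar hv h
    have hW'le : W' ≤ W := inf_le_left
    have hfd' : FiniteDimensional F W' := Submodule.finiteDimensional_of_le hW'le
    have hrk' : finrank F W' ≤ n := by
      have : finrank F W' < finrank F W :=
        Submodule.finrank_lt_finrank_of_lt (lt_of_le_of_ne hW'le (fun h => hvnW' (h ▸ hvW)))
      omega
    -- decomposition of an element of W along v and W'
    have hdec : ∀ y ∈ W, ∃ c : F, ∃ y' ∈ W', y = c • v + y' := by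
      intro y hy
      refine ⟨polar Q v y / (2 * Q v), y - (polar Q v y / (2 * Q v)) • v, ?_, by abel⟩
      rw [hmemW']
      constructor
      · exact W.sub_mem hy (W.smul_mem _ hvW)
      · rw [polar_sub_right, polar_smul_right, hpvv]
        rw [smul_eq_mul]
        field_simp
        ring
    have hnd' : Ndg Q W' := by
      intro x hx hxperp
      refine hnd x (hW'le hx) fun y hy => ?_
      obtain ⟨c, y', hy', rfl⟩ := hdec y hy
      rw [polar_add_right, polar_smul_right, hxperp y' hy']
      have : polar Q x v = 0 := by
        rw [polar_comm]
        exact ((hmemW' x).mp hx).2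
      rw [this]
      simp
    -- key fact: if ψ preserves Q and fixes v, then ψ x - x ∈ W' whenever ψ x - x ∈ W
    have hperp : ∀ ψ : V →ₗ[F] V, (∀ x, Q (ψ x) = Q x) → ψ v = v →
        (∀ x, ψ x - x ∈ W) → (∀ x, ψ x - x ∈ W') := by
      intro ψ hψQ hψv hψW x
      rw [hmemW']
      refine ⟨hψW x, ?_⟩
      rw [polar_sub_right]
      have := polar_map Q ψ hψQ v x
      rw [hψv] at this
      rw [this, sub_self]
    by_cases hcase : φ v = v
    · obtain ⟨l, hl, hprod⟩ := IH W' hfd' hrk' hnd' φ hφQ (hperp φ hφQ hcase hφW)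
      exact ⟨l, fun w hw => ⟨(hl w hw).1, hW'le (hl w hw).2⟩, hprod⟩
    by_cases hB : Q (φ v - v) ≠ 0
    · -- case 1 : one reflection
      set u : V := φ v - v with hu
      have huW : u ∈ W := hφW v
      set ψ : V →ₗ[F] V := rf Q u * φ with hψ
      have hψQ : ∀ x, Q (ψ x) = Q x := fun x => by
        rw [hψ, Module.End.mul_apply, rf_map_Q Q hB, hφQ]
      have hψv : ψ v = v := by
        rw [hψ, Module.End.mul_apply, hu]
        exact rf_case1 Q (hφQ v) hB
      have hψW : ∀ x, ψ x - x ∈ W := by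
        intro x
        have h1 : ψ x - φ x ∈ W := by
          rw [hψ, Module.End.mul_apply, rf_sub_mem]
          exact W.smul_mem _ huW
        have := W.add_mem h1 (hφW x)
        simpa using this
      obtain ⟨l, hl, hprod⟩ := IH W' hfd' hrk' hnd' ψ hψQ (hperp ψ hψQ hψv hψW)
      refine ⟨u :: l, ?_, ?_⟩
      · intro w hw
        rcases List.mem_cons.mp hw with rfl | hw
        · exact ⟨hB, huW⟩
        · exact ⟨(hl w hw).1, hW'le (hl w hw).2⟩
      · have hinv : rf Q u * rf Q u = 1 := by
          ext x
          simpa using rf_rf Q hB x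
        rw [List.map_cons, List.prod_cons, ← hprod, hψ, ← mul_assoc, hinv, one_mul]
    · -- case 2 : two reflections
      push_neg at hB
      have hQu : Q (φ v + v) = 4 * Q v := q_add_of_q_sub_zero Q (hφQ v) hB
      have h4 : (4 : F) ≠ 0 := by
        have := mul_ne_zero hchar hchar
        norm_num at this ⊢
        exact this
      have hu4 : Q (φ v + v) ≠ 0 := by rw [hQu]; exact mul_ne_zero h4 hv
      set u : V := φ v + v with hu
      have huW : u ∈ W := by
        have : u = (φ v - v) + (2 : F) • v := by rw [hu]; module
        rw [this]
        exact W.add_mem (hφW v) (W.smul_mem _ hvW)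
      set ψ : V →ₗ[F] V := rf Q v * (rf Q u * φ) with hψ
      have hψQ : ∀ x, Q (ψ x) = Q x := fun x => by
        rw [hψ, Module.End.mul_apply, Module.End.mul_apply, rf_map_Q Q hv, rf_map_Q Q hu4, hφQ]
      have hψv : ψ v = v := by
        rw [hψ, Module.End.mul_apply, Module.End.mul_apply, hu, rf_case2 Q (hφQ v) hu4,
          LinearMap.map_neg, rf_self Q hv, neg_neg]
      have hψW : ∀ x, ψ x - x ∈ W := by
        intro x
        have h1 : ψ x - rf Q u (φ x) ∈ W := by
          rw [hψ, Module.End.mul_apply, Module.End.mul_apply, rf_sub_mem]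
          exact W.smul_mem _ hvW
        have h2 : rf Q u (φ x) - φ x ∈ W := by
          rw [rf_sub_mem]
          exact W.smul_mem _ huW
        have := W.add_mem (W.add_mem h1 h2) (hφW x)
        simpa using this
      obtain ⟨l, hl, hprod⟩ := IH W' hfd' hrk' hnd' ψ hψQ (hperp ψ hψQ hψv hψW)
      refine ⟨u :: v :: l, ?_, ?_⟩
      · intro w hw
        rcases List.mem_cons.mp hw with rfl | hw
        · exact ⟨hu4, huW⟩
        rcases List.mem_cons.mp hw with rfl | hw
        · exact ⟨hv, hvW⟩
        · exact ⟨(hl w hw).1, hW'le (hl w hw).2⟩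
      · have hinvu : rf Q u * rf Q u = 1 := by
          ext x; simpa using rf_rf Q hu4 x
        have hinvv : rf Q v * rf Q v = 1 := by
          ext x; simpa using rf_rf Q hv x
        rw [List.map_cons, List.map_cons, List.prod_cons, List.prod_cons, ← hprod, hψ,
          ← mul_assoc (rf Q v) (rf Q v), hinvv, one_mul, ← mul_assoc, hinvu, one_mul]

end CD

section Extend
variable {F V : Type*} [Field F] [AddCommGroup V] [Module F V]
variable (Q : QuadraticForm F V)

/-- The radical of the polar form restricted to `W`. -/
noncomputable def radW (W : Submodule F V) : Submodule F V :=
  W ⊓ (⨅ y ∈ W, LinearMap.ker (polarBilin Q y))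

theorem mem_radW {W : Submodule F V} {x : V} :
    x ∈ radW Q W ↔ x ∈ W ∧ ∀ y ∈ W, polar Q y x = 0 := by
  simp [radW, LinearMap.mem_ker]

theorem ndg_of_radW_eq_bot {W : Submodule F V} (h : radW Q W = ⊥) : Ndg Q W := by
  intro x hx hperp
  have : x ∈ radW Q W := by
    rw [mem_radW]
    exact ⟨hx, fun y hy => by rw [polar_comm]; exact hperp y hy⟩
  rw [h, Submodule.mem_bot] at this
  exact this

theorem exists_ndg_ext_aux (hQ : ∀ v : V, (∀ w : V, polar Q v w = 0) → v = 0) :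
    ∀ n : ℕ, ∀ U : Submodule F V, FiniteDimensional F U →
    Module.finrank F (radW Q U) ≤ n →
    ∃ W : Submodule F V, U ≤ W ∧ FiniteDimensional F W ∧ Ndg Q W := by
  intro n
  induction n with
  | zero =>
    intro U hfd hrk
    have : FiniteDimensional F (radW Q U) :=
      Submodule.finiteDimensional_of_le (inf_le_left : radW Q U ≤ U)
    exact ⟨U, le_refl _, hfd,
      ndg_of_radW_eq_bot Q (Submodule.finrank_eq_zero.mp (Nat.le_zero.mp hrk))⟩
  | succ n IH =>
    intro U hfd hrk
    have hfdrad : FiniteDimensional F (radW Q U) :=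
      Submodule.finiteDimensional_of_le (inf_le_left : radW Q U ≤ U)
    by_cases hbot : radW Q U = ⊥
    · exact ⟨U, le_refl _, hfd, ndg_of_radW_eq_bot Q hbot⟩
    obtain ⟨r, hr, hr0⟩ := Submodule.exists_mem_ne_zero_of_ne_bot hbot
    obtain ⟨s, hs⟩ : ∃ s : V, polar Q r s ≠ 0 := by
      by_contra h
      push_neg at h
      exact hr0 (hQ r h)
    set U₁ : Submodule F V := U ⊔ Submodule.span F {s} with hU₁
    have hle : U ≤ U₁ := le_sup_left
    have hsU₁ : s ∈ U₁ := (le_sup_right : Submodule.span F {s} ≤ U₁) (Submodule.mem_span_singleton_self s)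
    have hfd₁ : FiniteDimensional F U₁ := by
      have : FiniteDimensional F (Submodule.span F ({s} : Set V)) := by
        apply FiniteDimensional.span_singleton
      infer_instance
    have hradle : radW Q U₁ ≤ radW Q U ⊓ LinearMap.ker (polarBilin Q s) := by
      intro x hx
      rw [mem_radW] at hx
      obtain ⟨hxU₁, hxperp⟩ := hx
      obtain ⟨u, hu, z, hz, rfl⟩ := Submodule.mem_sup.mp hxU₁
      obtain ⟨c, rfl⟩ := Submodule.mem_span_singleton.mp hz
      have hru : polar Q r u = 0 := by
        rw [polar_comm]
        exact (mem_radW Q |>.mp hr).2 u hu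
      have hc : c = 0 := by
        have := hxperp r (hle ((mem_radW Q |>.mp hr).1))
        rw [polar_add_right, polar_smul_right, hru, zero_add, smul_eq_mul] at this
        rcases mul_eq_zero.mp this with h | h
        · exact h
        · exact absurd h hs
      subst hc
      rw [zero_smul, add_zero] at hxperp hxU₁ ⊢
      refine Submodule.mem_inf.mpr ⟨?_, ?_⟩
      · rw [mem_radW]
        exact ⟨hu, fun y hy => hxperp y (hle hy)⟩
      · rw [LinearMap.mem_ker]
        exact hxperp s hsU₁
    have hrnot : r ∉ radW Q U₁ := by
      intro hmem
      have := hradle hmem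
      rw [Submodule.mem_inf, LinearMap.mem_ker] at this
      have h2 := this.2
      rw [polarBilin_apply_apply, polar_comm] at h2
      exact hs h2
    have hlt : radW Q U₁ < radW Q U := by
      refine lt_of_le_of_ne (le_trans hradle inf_le_left) fun h => hrnot (h ▸ hr)
    have hrk₁ : Module.finrank F (radW Q U₁) ≤ n := by
      have := Submodule.finrank_lt_finrank_of_lt hlt
      omega
    exact (IH U₁ hfd₁ hrk₁).imp fun W hW => ⟨le_trans hle hW.1, hW.2⟩

theorem exists_ndg_ext (hQ : ∀ v : V, (∀ w : V, polar Q v w = 0) → v = 0)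
    (U : Submodule F V) (hfd : FiniteDimensional F U) :
    ∃ W : Submodule F V, U ≤ W ∧ FiniteDimensional F W ∧ Ndg Q W :=
  exists_ndg_ext_aux Q hQ _ U hfd le_rfl

end Extend

section Cliff
open CliffordAlgebra
variable {F V : Type*} [Field F] [AddCommGroup V] [Module F V]
variable (Q : QuadraticForm F V)

/-- `ι Q w` as a unit of the Clifford algebra, for anisotropic `w`. -/
noncomputable def rfUnit {w : V} (hw : Q w ≠ 0) : (CliffordAlgebra Q)ˣ where
  val := ι Q w
  inv := (Q w)⁻¹ • ι Q w
  val_inv := by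
    rw [mul_smul_comm, ι_sq_scalar, Algebra.smul_def, ← map_mul, inv_mul_cancel₀ hw, map_one]
  inv_val := by
    rw [smul_mul_assoc, ι_sq_scalar, Algebra.smul_def, ← map_mul, inv_mul_cancel₀ hw, map_one]

theorem rfUnit_conj {w : V} (hw : Q w ≠ 0) (v : V) :
    (ι Q w) * ι Q v * ((Q w)⁻¹ • ι Q w) = - ι Q (rf Q w v) := by
  have h1 : ι Q w * ι Q v = algebraMap F _ (polar Q w v) - ι Q v * ι Q w :=
    ι_mul_ι_comm w v
  calc (ι Q w) * ι Q v * ((Q w)⁻¹ • ι Q w)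
      = (Q w)⁻¹ • ((algebraMap F _ (polar Q w v) - ι Q v * ι Q w) * ι Q w) := by
        rw [← h1, mul_smul_comm]
    _ = (Q w)⁻¹ • ((polar Q w v) • ι Q w - (Q w) • ι Q v) := by
        rw [sub_mul, mul_assoc, ι_sq_scalar, ← Algebra.smul_def]
        rw [show ι Q v * algebraMap F _ (Q w) = algebraMap F _ (Q w) * ι Q v from
          (Algebra.commutes _ _).symm, ← Algebra.smul_def]
    _ = ((Q w)⁻¹ * polar Q w v) • ι Q w - ι Q v := by
        rw [smul_sub, smul_smul, smul_smul, inv_mul_cancel₀ hw, one_smul]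
    _ = - ι Q (rf Q w v) := by
        rw [rf_apply, _root_.map_sub, _root_.map_smul, neg_sub]

theorem conj_list (l : List V) (hl : ∀ w ∈ l, Q w ≠ 0) :
    ∃ x : (CliffordAlgebra Q)ˣ, ∀ v : V,
      (x : CliffordAlgebra Q) * ι Q v * (↑x⁻¹ : CliffordAlgebra Q) =
        ((-1 : F) ^ l.length) • ι Q (((l.map (rf Q)).prod) v) := by
  induction l with
  | nil =>
    refine ⟨1, fun v => ?_⟩
    simp
  | cons w l IH =>
    have hw : Q w ≠ 0 := hl w (List.mem_cons_self)
    obtain ⟨y, hy⟩ := IH fun z hz => hl z (List.mem_cons_of_mem w hz)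
    refine ⟨rfUnit Q hw * y, fun v => ?_⟩
    rw [mul_inv_rev, Units.val_mul, Units.val_mul]
    have : (↑(rfUnit Q hw) : CliffordAlgebra Q) * ↑y * ι Q v * (↑y⁻¹ * ↑(rfUnit Q hw)⁻¹) =
        (↑(rfUnit Q hw) : CliffordAlgebra Q) * (↑y * ι Q v * ↑y⁻¹) * ↑(rfUnit Q hw)⁻¹ := by
      noncomm_ring
    rw [this, hy v]
    have hval : (↑(rfUnit Q hw) : CliffordAlgebra Q) = ι Q w := rfl
    have hinv : (↑(rfUnit Q hw)⁻¹ : CliffordAlgebra Q) = (Q w)⁻¹ • ι Q w := rfl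
    rw [hval, hinv]
    have hstep : (ι Q w) * ((-1 : F) ^ l.length • ι Q ((List.map (rf Q) l).prod v)) *
        ((Q w)⁻¹ • ι Q w) = (-1 : F) ^ l.length •
        ((ι Q w) * ι Q ((List.map (rf Q) l).prod v) * ((Q w)⁻¹ • ι Q w)) := by
      simp only [mul_smul_comm, smul_mul_assoc, smul_smul]
      rw [mul_comm]
    rw [hstep, rfUnit_conj Q hw, List.map_cons, List.prod_cons, List.length_cons,
      Module.End.mul_apply, pow_succ, mul_smul, neg_one_smul, smul_neg]

end Cliff

section Det
variable {F M : Type*} [Field F] [AddCommGroup M] [Module F M] [FiniteDimensional F M]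

/-- If `f` is the identity modulo an invariant subspace `p`, then `det f` equals the
determinant of the restriction of `f` to `p`. -/
theorem det_eq_det_restrict (f : M →ₗ[F] M) (p : Submodule F M)
    (hinv : ∀ x ∈ p, f x ∈ p) (hqid : ∀ x : M, f x - x ∈ p) :
    LinearMap.det f = LinearMap.det (f.restrict hinv) := by
  obtain ⟨q, hcompl⟩ := Submodule.exists_isCompl p
  set e := Submodule.prodEquivOfIsCompl p q hcompl with he
  set b₁ := finBasis F p with hb₁
  set b₂ := finBasis F q with hb₂
  set b := b₁.prod b₂ with hb
  have key : ∀ y : q, e.symm (f ↑y) = (⟨f ↑y - ↑y, hqid ↑y⟩, y) := by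
    intro y
    have h1 : f ↑y = ↑(⟨f ↑y - ↑y, hqid ↑y⟩ : p) + ↑y := by simp
    have h2 := congrArg e.symm h1
    rw [map_add, Submodule.prodEquivOfIsCompl_symm_apply_left,
      Submodule.prodEquivOfIsCompl_symm_apply_right, Prod.mk_add_mk, add_zero, zero_add] at h2
    exact h2
  have keyp : ∀ z : p, e.symm (f ↑z) = (f.restrict hinv z, 0) := by
    intro z
    have h1 : f ↑z = ↑(f.restrict hinv z) := rfl
    rw [h1, Submodule.prodEquivOfIsCompl_symm_apply_left]
  have hg : ∀ x : p × q, (e.symm.conj f) x = e.symm (f (e x)) := by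
    intro x
    rw [LinearEquiv.conj_apply]
    simp
  have hmat : LinearMap.toMatrix b b (e.symm.conj f) =
      Matrix.fromBlocks (LinearMap.toMatrix b₁ b₁ (f.restrict hinv))
        (Matrix.of fun i j => b₁.repr (⟨f ↑(b₂ j) - ↑(b₂ j), hqid ↑(b₂ j)⟩ : p) i) 0 1 := by
    ext (i | i) (j | j)
    · rw [LinearMap.toMatrix_apply, Matrix.fromBlocks_apply₁₁, hg, LinearMap.toMatrix_apply]
      have hbj : (b (Sum.inl j)) = ((b₁ j : p), (0 : q)) :=
        Prod.ext (b₁.prod_apply_inl_fst b₂ j) (b₁.prod_apply_inl_snd b₂ j)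
      rw [hbj]
      have : e ((b₁ j : p), (0 : q)) = ↑(b₁ j) := by
        rw [Submodule.coe_prodEquivOfIsCompl']; simp
      rw [this, keyp, Basis.prod_repr_inl]
    · rw [LinearMap.toMatrix_apply, Matrix.fromBlocks_apply₁₂, hg]
      have hbj : (b (Sum.inr j)) = ((0 : p), (b₂ j : q)) :=
        Prod.ext (b₁.prod_apply_inr_fst b₂ j) (b₁.prod_apply_inr_snd b₂ j)
      rw [hbj]
      have : e ((0 : p), (b₂ j : q)) = ↑(b₂ j) := by
        rw [Submodule.coe_prodEquivOfIsCompl']; simp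
      rw [this, key, Basis.prod_repr_inl]
      rfl
    · rw [LinearMap.toMatrix_apply, Matrix.fromBlocks_apply₂₁, hg]
      have hbj : (b (Sum.inl j)) = ((b₁ j : p), (0 : q)) :=
        Prod.ext (b₁.prod_apply_inl_fst b₂ j) (b₁.prod_apply_inl_snd b₂ j)
      rw [hbj]
      have : e ((b₁ j : p), (0 : q)) = ↑(b₁ j) := by
        rw [Submodule.coe_prodEquivOfIsCompl']; simp
      rw [this, keyp, Basis.prod_repr_inr]
      simp
    · rw [LinearMap.toMatrix_apply, Matrix.fromBlocks_apply₂₂, hg]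
      have hbj : (b (Sum.inr j)) = ((0 : p), (b₂ j : q)) :=
        Prod.ext (b₁.prod_apply_inr_fst b₂ j) (b₁.prod_apply_inr_snd b₂ j)
      rw [hbj]
      have : e ((0 : p), (b₂ j : q)) = ↑(b₂ j) := by
        rw [Submodule.coe_prodEquivOfIsCompl']; simp
      rw [this, key, Basis.prod_repr_inr]
      simp [Matrix.one_apply, Finsupp.single_apply, eq_comm]
  have hdet : LinearMap.det (e.symm.conj f) = LinearMap.det f := LinearMap.det_conj f e.symm
  rw [← hdet, ← LinearMap.det_toMatrix b, hmat, Matrix.det_fromBlocks_zero₂₁, Matrix.det_one,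
    mul_one, LinearMap.det_toMatrix]

/-- If `f` is the identity on an invariant subspace `p`, then `det f` equals the determinant
of the induced map on the quotient `M ⧸ p`. -/
theorem det_eq_det_mapQ (f : M →ₗ[F] M) (p : Submodule F M)
    (hle : p ≤ p.comap f) (hid : ∀ x ∈ p, f x = x) :
    LinearMap.det f = LinearMap.det (p.mapQ p f hle) := by
  obtain ⟨q, hcompl⟩ := Submodule.exists_isCompl p
  set e := Submodule.prodEquivOfIsCompl p q hcompl with he
  set b₁ := finBasis F p with hb₁
  set b₂ := finBasis F q with hb₂
  set b := b₁.prod b₂ with hb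
  set π : M →ₗ[F] p := p.projectionOnto q hcompl with hπ
  set π' : M →ₗ[F] q := q.projectionOnto p hcompl.symm with hπ'
  set fq : q →ₗ[F] q := π' ∘ₗ f ∘ₗ q.subtype with hfq
  have hsymm : ∀ x : M, e.symm x = (π x, π' x) := by
    intro x
    apply e.injective
    rw [e.apply_symm_apply, Submodule.coe_prodEquivOfIsCompl']
    exact (Submodule.projection_add_projection_eq_self hcompl x).symm
  have hmat : LinearMap.toMatrix b b (e.symm.conj f) =
      Matrix.fromBlocks 1 (Matrix.of fun i j => b₁.repr (π (f ↑(b₂ j))) i) 0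
        (LinearMap.toMatrix b₂ b₂ fq) := by
    have hg : ∀ x : ↥p × ↥q, (e.symm.conj f) x = e.symm (f (e x)) := by
      intro x
      rw [LinearEquiv.conj_apply]
      simp
    have heL : ∀ j, e ((b₁ j : p), (0 : q)) = ↑(b₁ j) := by
      intro j; rw [Submodule.coe_prodEquivOfIsCompl']; simp
    have heR : ∀ j, e ((0 : p), (b₂ j : q)) = ↑(b₂ j) := by
      intro j; rw [Submodule.coe_prodEquivOfIsCompl']; simp
    have hL : ∀ j, e.symm (f ↑(b₁ j)) = ((b₁ j : p), (0 : q)) := by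
      intro j
      rw [hid ↑(b₁ j) (b₁ j).2, Submodule.prodEquivOfIsCompl_symm_apply_left]
    ext (i | i) (j | j)
    · rw [LinearMap.toMatrix_apply, Matrix.fromBlocks_apply₁₁, hg]
      have hbj : (b (Sum.inl j)) = ((b₁ j : p), (0 : q)) :=
        Prod.ext (b₁.prod_apply_inl_fst b₂ j) (b₁.prod_apply_inl_snd b₂ j)
      rw [hbj, heL, hL, Basis.prod_repr_inl]
      simp [Matrix.one_apply, Finsupp.single_apply, eq_comm]
    · rw [LinearMap.toMatrix_apply, Matrix.fromBlocks_apply₁₂, hg]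
      have hbj : (b (Sum.inr j)) = ((0 : p), (b₂ j : q)) :=
        Prod.ext (b₁.prod_apply_inr_fst b₂ j) (b₁.prod_apply_inr_snd b₂ j)
      rw [hbj, heR, hsymm, Basis.prod_repr_inl]
      rfl
    · rw [LinearMap.toMatrix_apply, Matrix.fromBlocks_apply₂₁, hg]
      have hbj : (b (Sum.inl j)) = ((b₁ j : p), (0 : q)) :=
        Prod.ext (b₁.prod_apply_inl_fst b₂ j) (b₁.prod_apply_inl_snd b₂ j)
      rw [hbj, heL, hL, Basis.prod_repr_inr]
      simp
    · rw [LinearMap.toMatrix_apply, Matrix.fromBlocks_apply₂₂, hg]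
      have hbj : (b (Sum.inr j)) = ((0 : p), (b₂ j : q)) :=
        Prod.ext (b₁.prod_apply_inr_fst b₂ j) (b₁.prod_apply_inr_snd b₂ j)
      rw [hbj, heR, hsymm, Basis.prod_repr_inr, LinearMap.toMatrix_apply]
      rfl
  have hdetf : LinearMap.det f = LinearMap.det fq := by
    have hdet : LinearMap.det (e.symm.conj f) = LinearMap.det f := LinearMap.det_conj f e.symm
    rw [← hdet, ← LinearMap.det_toMatrix b, hmat, Matrix.det_fromBlocks_zero₂₁, Matrix.det_one,
      one_mul, LinearMap.det_toMatrix]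
  set ε := Submodule.quotientEquivOfIsCompl p q hcompl with hε
  have hconj : ∀ y : q, ε.symm (fq y) = (p.mapQ p f hle) (ε.symm y) := by
    intro y
    rw [Submodule.quotientEquivOfIsCompl_symm_apply, Submodule.quotientEquivOfIsCompl_symm_apply,
      Submodule.mapQ_apply]
    rw [Submodule.Quotient.eq]
    have hself : (π (f ↑y) : M) + (π' (f ↑y) : M) = f ↑y :=
      Submodule.projection_add_projection_eq_self hcompl (f ↑y)
    have : (↑(fq y) : M) - f ↑y = -(↑(π (f ↑y))) := by
      apply eq_neg_of_add_eq_zero_left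
      show ((π' (f ↑y) : q) : M) - f ↑y + ↑(π (f ↑y)) = 0
      rw [sub_add_eq_add_sub, add_comm, hself, sub_self]
    rw [this]
    exact p.neg_mem (π (f ↑y)).2
  have hmapq : p.mapQ p f hle = ε.symm.conj fq := by
    apply LinearMap.ext
    intro z
    rw [LinearEquiv.conj_apply]
    have : z = ε.symm (ε z) := (ε.symm_apply_apply z).symm
    calc (p.mapQ p f hle) z = (p.mapQ p f hle) (ε.symm (ε z)) := by rw [← this]
      _ = ε.symm (fq (ε z)) := (hconj (ε z)).symm
      _ = ε.symm (fq (ε.symm.symm z)) := by rw [LinearEquiv.symm_symm]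
      _ = (ε.symm.toLinearMap.comp ((fq : ↥q →ₗ[F] ↥q).comp (ε.symm.symm : _ →ₗ[F] _))) z := rfl
  rw [hdetf, hmapq]
  exact (LinearMap.det_conj fq ε.symm).symm

end Det

section DetRf
variable {F V : Type*} [Field F] [AddCommGroup V] [Module F V]
variable (Q : QuadraticForm F V)

theorem rf_mem {W : Submodule F V} {w : V} (hw : w ∈ W) {x : V} (hx : x ∈ W) :
    rf Q w x ∈ W := by
  rw [rf_apply]
  exact W.sub_mem hx (W.smul_mem _ hw)

theorem rf_prod_mem {W : Submodule F V} (l : List V) (hl : ∀ w ∈ l, w ∈ W) :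
    ∀ x ∈ W, ((l.map (rf Q)).prod) x ∈ W := by
  induction l with
  | nil => intro x hx; simpa using hx
  | cons w l IH =>
    intro x hx
    rw [List.map_cons, List.prod_cons, Module.End.mul_apply]
    exact rf_mem Q (hl w (List.mem_cons_self))
      (IH (fun z hz => hl z (List.mem_cons_of_mem w hz)) x hx)

theorem det_rf_restrict (hchar : (2 : F) ≠ 0) {W : Submodule F V} [FiniteDimensional F W]
    {w : V} (hwW : w ∈ W) (hw : Q w ≠ 0)
    (h : ∀ x ∈ W, rf Q w x ∈ W) :
    LinearMap.det ((rf Q w).restrict h) = -1 := by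
  set lam : W →ₗ[F] F := (polarBilin Q w) ∘ₗ W.subtype with hlam
  set pc : Submodule F W := LinearMap.ker lam with hpc
  have hlamw : lam ⟨w, hwW⟩ = 2 * Q w := by
    rw [hlam]
    simp [polar_self, two_nsmul, two_mul]
  have h2Q : (2 : F) * Q w ≠ 0 := mul_ne_zero hchar hw
  set f := (rf Q w).restrict h with hf
  have hid : ∀ x ∈ pc, f x = x := by
    intro x hx
    rw [hpc, LinearMap.mem_ker, hlam] at hx
    simp only [LinearMap.comp_apply, Submodule.coe_subtype, polarBilin_apply_apply] at hx
    apply Subtype.ext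
    rw [hf, LinearMap.restrict_apply]
    exact rf_of_ortho Q hx
  have hle : pc ≤ pc.comap f := by
    intro x hx
    rw [Submodule.mem_comap, hid x hx]
    exact hx
  have hdet1 : LinearMap.det f = LinearMap.det (pc.mapQ pc f hle) :=
    det_eq_det_mapQ f pc hle hid
  have hneg : pc.mapQ pc f hle = -LinearMap.id := by
    apply Submodule.linearMap_qext
    apply LinearMap.ext
    intro x
    simp only [LinearMap.comp_apply, Submodule.mkQ_apply, Submodule.mapQ_apply,
      LinearMap.neg_apply, LinearMap.id_coe, id_eq]
    rw [← Submodule.Quotient.mk_neg, Submodule.Quotient.eq]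
    rw [hpc, LinearMap.mem_ker, hlam]
    have : ((f x : W) : V) - (-(x : V)) = rf Q w (x : V) + (x : V) := by
      rw [hf, LinearMap.restrict_apply]
      abel
    simp only [LinearMap.comp_apply, Submodule.coe_subtype, polarBilin_apply_apply]
    rw [show ((f x - -x : W) : V) = rf Q w (x : V) + (x : V) by
      rw [Submodule.coe_sub, Submodule.coe_neg]; exact this]
    rw [rf_apply, polar_add_right, polar_sub_right, polar_smul_right, polar_self,
      two_nsmul, ← two_mul]
    field_simp
    ring_nf
    field_simp
    ring
  have hrange : LinearMap.range lam = ⊤ := by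
    rw [Submodule.eq_top_iff']
    intro c
    rw [LinearMap.mem_range]
    refine ⟨(c / (2 * Q w)) • ⟨w, hwW⟩, ?_⟩
    rw [LinearMap.map_smul, hlamw, smul_eq_mul]
    field_simp
  have hrk : Module.finrank F (W ⧸ pc) = 1 := by
    have e1 := lam.quotKerEquivRange
    rw [hrange] at e1
    rw [e1.finrank_eq, finrank_top, Module.finrank_self]
  rw [hdet1, hneg]
  have : (-LinearMap.id : (W ⧸ pc) →ₗ[F] (W ⧸ pc)) = (-1 : F) • LinearMap.id := by
    ext x; simp
  rw [this, LinearMap.det_smul, hrk, LinearMap.det_id, pow_one, mul_one]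

theorem det_rf_prod_restrict (hchar : (2 : F) ≠ 0) {W : Submodule F V} [FiniteDimensional F W]
    (l : List V) (hl : ∀ w ∈ l, Q w ≠ 0 ∧ w ∈ W)
    (h : ∀ x ∈ W, ((l.map (rf Q)).prod) x ∈ W) :
    LinearMap.det (((l.map (rf Q)).prod).restrict h) = (-1 : F) ^ l.length := by
  induction l with
  | nil =>
    have : ((List.map (rf Q) []).prod).restrict h = LinearMap.id := by
      apply LinearMap.ext
      intro x
      apply Subtype.ext
      rw [LinearMap.restrict_apply]
      simp
    rw [this, LinearMap.det_id, List.length_nil, pow_zero]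
  | cons w l IH =>
    have hw := hl w (List.mem_cons_self)
    have hl' : ∀ z ∈ l, Q z ≠ 0 ∧ z ∈ W := fun z hz => hl z (List.mem_cons_of_mem w hz)
    have h1 : ∀ x ∈ W, rf Q w x ∈ W := fun x hx => rf_mem Q hw.2 hx
    have h2 : ∀ x ∈ W, ((l.map (rf Q)).prod) x ∈ W :=
      rf_prod_mem Q l (fun z hz => (hl' z hz).2)
    have hsplit : ((List.map (rf Q) (w :: l)).prod).restrict h =
        ((rf Q w).restrict h1) ∘ₗ (((l.map (rf Q)).prod).restrict h2) := by
      apply LinearMap.ext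
      intro x
      apply Subtype.ext
      simp [LinearMap.restrict_apply, List.prod_cons]
    rw [hsplit, LinearMap.det_comp, det_rf_restrict Q hchar hw.2 hw.1 h1, IH hl' h2,
      List.length_cons, pow_succ, mul_comm]

end DetRf


section Chain
variable {F V : Type*} [Field F] [AddCommGroup V] [Module F V]

theorem mem_eigSp_one {φ : V →ₗ[F] V} {x : V} : x ∈ eigSp φ 1 ↔ φ x = x := by
  simp [eigSp, LinearMap.mem_ker, sub_eq_zero]

theorem quotMap_mk {φ : V →ₗ[F] V} (x : V) :
    quotMap φ 1 (Submodule.Quotient.mk x) = Submodule.Quotient.mk (φ x) := by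
  simp [quotMap, Submodule.mapQ_apply]

theorem det_restrict_eq_det_quotMap (φ : V →ₗ[F] V)
    (hfin : FiniteDimensional F (V ⧸ eigSp φ 1))
    (W : Submodule F V) [FiniteDimensional F W]
    (hφW : ∀ x : V, φ x - x ∈ W)
    (hWinv : ∀ x ∈ W, φ x ∈ W) :
    LinearMap.det (φ.restrict hWinv) = LinearMap.det (quotMap φ 1) := by
  set K : Submodule F V := eigSp φ 1 with hK
  set f : W →ₗ[F] W := φ.restrict hWinv with hf
  set Kw : Submodule F W := Submodule.comap W.subtype K with hKw
  have hid : ∀ x ∈ Kw, f x = x := by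
    intro x hx
    rw [hKw, Submodule.mem_comap] at hx
    apply Subtype.ext
    rw [hf, LinearMap.restrict_apply]
    exact mem_eigSp_one.mp hx
  have hle : Kw ≤ Kw.comap f := by
    intro x hx
    rw [Submodule.mem_comap, hid x hx]
    exact hx
  have step1 : LinearMap.det f = LinearMap.det (Kw.mapQ Kw f hle) :=
    det_eq_det_mapQ f Kw hle hid
  -- the image of W in V ⧸ K
  set T : Submodule F (V ⧸ eigSp φ 1) := W.map K.mkQ with hT
  have hTinv : ∀ z ∈ T, quotMap φ 1 z ∈ T := by
    intro z hz
    rw [hT, Submodule.mem_map] at hz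
    obtain ⟨w, hw, rfl⟩ := hz
    rw [Submodule.mkQ_apply, quotMap_mk]
    have : φ w = w + (φ w - w) := by abel
    rw [this]
    have : Submodule.Quotient.mk (w + (φ w - w)) =
        K.mkQ w + K.mkQ (φ w - w) := by simp
    rw [this]
    exact T.add_mem (Submodule.mem_map_of_mem hw) (Submodule.mem_map_of_mem (hφW w))
  have hTqid : ∀ z : V ⧸ eigSp φ 1, quotMap φ 1 z - z ∈ T := by
    intro z
    obtain ⟨x, rfl⟩ := Submodule.Quotient.mk_surjective K z
    rw [quotMap_mk, ← Submodule.Quotient.mk_sub]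
    exact Submodule.mem_map_of_mem (hφW x)
  have step2 : LinearMap.det (quotMap φ 1) = LinearMap.det ((quotMap φ 1).restrict hTinv) :=
    det_eq_det_restrict (quotMap φ 1) T hTinv hTqid
  -- the equivalence (W ⧸ Kw) ≃ T
  set τ0 : W →ₗ[F] (V ⧸ eigSp φ 1) := K.mkQ ∘ₗ W.subtype with hτ0
  have hτ0mem : ∀ x : W, τ0 x ∈ T := by
    intro x
    exact Submodule.mem_map_of_mem x.2
  set τ : W →ₗ[F] T := τ0.codRestrict T hτ0mem with hτ
  have hker : LinearMap.ker τ = Kw := by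
    ext x
    rw [LinearMap.mem_ker, hKw, Submodule.mem_comap]
    constructor
    · intro hx
      have : τ0 x = 0 := congrArg Subtype.val hx
      rw [hτ0] at this
      simp only [LinearMap.comp_apply, Submodule.coe_subtype, Submodule.mkQ_apply] at this
      rw [Submodule.Quotient.mk_eq_zero] at this
      exact this
    · intro hx
      apply Subtype.ext
      show τ0 x = 0
      rw [hτ0]
      simp only [LinearMap.comp_apply, Submodule.coe_subtype, Submodule.mkQ_apply]
      rw [Submodule.Quotient.mk_eq_zero]
      exact hx
  have hsurj : Function.Surjective τ := by
    rintro ⟨z, hz⟩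
    rw [hT, Submodule.mem_map] at hz
    obtain ⟨w, hw, rfl⟩ := hz
    exact ⟨⟨w, hw⟩, rfl⟩
  set ε : (W ⧸ Kw) ≃ₗ[F] T :=
    (Submodule.quotEquivOfEq Kw (LinearMap.ker τ) hker.symm).trans
      (τ.quotKerEquivOfSurjective hsurj) with hε
  have hεmk : ∀ x : W, ε (Submodule.Quotient.mk x) = τ x := by
    intro x
    rfl
  have hcomm : ∀ z : W ⧸ Kw,
      (quotMap φ 1).restrict hTinv (ε z) = ε ((Kw.mapQ Kw f hle) z) := by
    intro z
    obtain ⟨x, rfl⟩ := Submodule.Quotient.mk_surjective Kw z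
    rw [Submodule.mapQ_apply, hεmk, hεmk]
    apply Subtype.ext
    rw [LinearMap.restrict_apply]
    show quotMap φ 1 (τ0 x) = τ0 (f x)
    rw [hτ0]
    simp only [LinearMap.comp_apply, Submodule.coe_subtype, Submodule.mkQ_apply]
    rw [quotMap_mk]
    congr 1
  have step3 : LinearMap.det ((quotMap φ 1).restrict hTinv) =
      LinearMap.det (Kw.mapQ Kw f hle) := by
    have hconj : (quotMap φ 1).restrict hTinv = ε.conj (Kw.mapQ Kw f hle) := by
      apply LinearMap.ext
      intro y
      rw [LinearEquiv.conj_apply]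
      have : y = ε (ε.symm y) := (ε.apply_symm_apply y).symm
      calc (quotMap φ 1).restrict hTinv y
          = (quotMap φ 1).restrict hTinv (ε (ε.symm y)) := by rw [← this]
        _ = ε ((Kw.mapQ Kw f hle) (ε.symm y)) := hcomm (ε.symm y)
        _ = _ := rfl
    rw [hconj]
    exact LinearMap.det_conj (Kw.mapQ Kw f hle) ε
  rw [step1, step2, step3]

end Chain

/-- Sufficiency, case (1): if `φ` is finitary and either `φ = Id` or
`det (φ|_{V/V(1)}) = 1`, then the Bogolyubov automorphism `[φ]` of `Cl(V, Q)`
is inner. -/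
theorem bogolyubov_automorphism_inner_of_finitary
    {F V : Type*} [Field F] [IsAlgClosed F] [AddCommGroup V] [Module F V]
    (hchar : (2 : F) ≠ 0) (hV : ¬ FiniteDimensional F V)
    (Q : QuadraticForm F V)
    (hQ : ∀ v : V, (∀ w : V, QuadraticMap.polar Q v w = 0) → v = 0)
    (φ : V →ₗ[F] V) (hφbij : Function.Bijective φ)
    (hφQ : ∀ v : V, Q (φ v) = Q v)
    (θ : CliffordAlgebra Q ≃ₐ[F] CliffordAlgebra Q)
    (hθ : ∀ v : V, θ (CliffordAlgebra.ι Q v) = CliffordAlgebra.ι Q (φ v))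
    (hfin : FiniteDimensional F (V ⧸ eigSp φ 1))
    (hdet : φ = LinearMap.id ∨ LinearMap.det (quotMap φ 1) = 1) :
    ∃ x : (CliffordAlgebra Q)ˣ, ∀ a : CliffordAlgebra Q, θ a = x * a * ↑x⁻¹ := by
  classical
  rcases hdet with hid | hdet1
  · refine ⟨1, fun a => ?_⟩
    have key : ∀ a, θ a = a := by
      intro a
      induction a using CliffordAlgebra.induction with
      | algebraMap r => exact θ.commutes r
      | ι v => rw [hθ v, hid]; rfl
      | mul a b ha hb => rw [map_mul, ha, hb]
      | add a b ha hb => rw [map_add, ha, hb]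
    rw [key a]
    simp
  · have hkereq : LinearMap.ker (φ - LinearMap.id) = eigSp φ 1 := by
      rw [eigSp, one_smul]
    have hfinU : FiniteDimensional F (LinearMap.range (φ - LinearMap.id)) := by
      have e := (φ - LinearMap.id).quotKerEquivRange
      rw [hkereq] at e
      exact Module.Finite.equiv e
    obtain ⟨W, hUW, hWfd, hWnd⟩ :=
      exists_ndg_ext Q hQ (LinearMap.range (φ - LinearMap.id)) hfinU
    have hφW : ∀ x : V, φ x - x ∈ W := by
      intro x
      apply hUW
      exact ⟨x, by simp⟩
    obtain ⟨l, hl, hprod⟩ :=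
      cartan_dieudonne Q hchar (Module.finrank F W) W hWfd le_rfl hWnd φ hφQ hφW
    have hWinv : ∀ x ∈ W, φ x ∈ W := by
      intro x hx
      have h1 : φ x = x + (φ x - x) := by abel
      rw [h1]
      exact W.add_mem hx (hφW x)
    have hproj : ∀ x ∈ W, ((l.map (rf Q)).prod) x ∈ W :=
      rf_prod_mem Q l (fun w hw => (hl w hw).2)
    have hrdet : LinearMap.det (φ.restrict hWinv) = (-1 : F) ^ l.length := by
      have heq : φ.restrict hWinv = ((l.map (rf Q)).prod).restrict hproj := by
        apply LinearMap.ext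
        intro x
        apply Subtype.ext
        rw [LinearMap.restrict_apply, LinearMap.restrict_apply]
        show φ (x : V) = ((l.map (rf Q)).prod) (x : V)
        rw [hprod]
      rw [heq]
      exact det_rf_prod_restrict Q hchar l hl hproj
    have hdetq := det_restrict_eq_det_quotMap φ hfin W hφW hWinv
    have hpow : (-1 : F) ^ l.length = 1 := by rw [← hrdet, hdetq, hdet1]
    have heven : Even l.length := by
      by_contra hodd
      rw [Nat.not_even_iff_odd] at hodd
      rw [hodd.neg_one_pow] at hpow
      exact hchar (by linear_combination -hpow)
    obtain ⟨x, hx⟩ := conj_list Q l (fun w hw => (hl w hw).1)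
    have hxι : ∀ v : V, (x : CliffordAlgebra Q) * CliffordAlgebra.ι Q v *
        (↑x⁻¹ : CliffordAlgebra Q) = CliffordAlgebra.ι Q (φ v) := by
      intro v
      rw [hx v, heven.neg_one_pow, one_smul, ← hprod]
    refine ⟨x, fun a => ?_⟩
    induction a using CliffordAlgebra.induction with
    | algebraMap r =>
      rw [AlgEquiv.commutes]
      have hc : (↑x : CliffordAlgebra Q) * algebraMap F _ r =
          algebraMap F _ r * ↑x := (Algebra.commutes r _).symm
      rw [hc, mul_assoc, Units.mul_inv, mul_one]
    | ι v => rw [hθ v, ← hxι v]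
    | mul a b ha hb =>
      rw [map_mul, ha, hb]
      simp only [mul_assoc]
      rw [Units.inv_mul_cancel_left]
    | add a b ha hb => rw [map_add, ha, hb, mul_add, add_mul]
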